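/- Let Q be a real f×m matrix of rank f, let k : {1,…,L₀} → {1,…,m} be an injective choice of column indices with m ≥ L₀ ≥ f, and let S = Q(:,k) be the f×L₀ submatrix of Q formed by the columns indexed by k, with S Sᵀ invertible. Assume S is dominant in the following sense: for every column index i of Q and every j ∈ {1,…,L₀}, the matrix S⁽ʲ←ⁱ⁾ obtained from S by replacing its j-th column with the i-th column qᵢ of Q satisfies det(S⁽ʲ←ⁱ⁾ (S⁽ʲ←ⁱ⁾)ᵀ) ≤ det(S Sᵀ). Then for every column index i of Q not in the range of k, the least-norm coefficient vector cᵢ = Sᵀ(S Sᵀ)⁻¹ qᵢ (which satisfies S cᵢ = qᵢ) obeys ‖cᵢ‖₂ ≤ √(f/(L₀ + 1 − f)). -/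

import Mathlib

open Matrix

/-- Theorem 1: if `S = Q(:,k)` is a dominant `f × L₀` submatrix of a rank-`f`
matrix `Q`, then for any column `qᵢ` of `Q` outside the seed set, the
least-norm coefficient vector `cᵢ = Sᵀ (S Sᵀ)⁻¹ qᵢ` satisfies
`‖cᵢ‖₂ ≤ √(f / (L₀ + 1 - f))`. -/
theorem norm_leastNormCoef_le_of_dominant
    (f m L₀ : ℕ) (hfL : f ≤ L₀) (hLm : L₀ ≤ m)
    (Q : Matrix (Fin f) (Fin m) ℝ) (hQ : Q.rank = f)
    (k : Fin L₀ → Fin m) (hk : Function.Injective k)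
    (S : Matrix (Fin f) (Fin L₀) ℝ) (hS : S = Q.submatrix id k)
    (hinv : IsUnit (S * Sᵀ))
    (hdom : ∀ (i : Fin m) (j : Fin L₀),
      ((S.updateCol j (fun a => Q a i)) * (S.updateCol j (fun a => Q a i))ᵀ).det
        ≤ (S * Sᵀ).det)
    (i : Fin m) (hi : i ∉ Set.range k)
    (c : Fin L₀ → ℝ) (hc : c = (Sᵀ * (S * Sᵀ)⁻¹).mulVec (fun a => Q a i)) :
    Real.sqrt (∑ j, c j ^ 2) ≤ Real.sqrt ((f : ℝ) / ((L₀ : ℝ) + 1 - f)) := by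
  set u : Fin f → ℝ := fun a => Q a i with hu
  set G : Matrix (Fin f) (Fin f) ℝ := S * Sᵀ with hG
  have hdetU : IsUnit G.det := (Matrix.isUnit_iff_isUnit_det G).mp hinv
  have hGG : G * G⁻¹ = 1 := Matrix.mul_nonsing_inv G hdetU
  have hGG' : G⁻¹ * G = 1 := Matrix.nonsing_inv_mul G hdetU
  have hGsym : Gᵀ = G := by rw [hG, transpose_mul, transpose_transpose]
  have hGinvsym : (G⁻¹)ᵀ = G⁻¹ := by
    rw [Matrix.transpose_nonsing_inv, hGsym]
  -- the bilinear form
  set B : (Fin f → ℝ) → (Fin f → ℝ) → ℝ := fun x y => x ⬝ᵥ (G⁻¹ *ᵥ y) with hB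
  have hBsymm : ∀ x y, B x y = B y x := by
    intro x y
    calc x ⬝ᵥ (G⁻¹ *ᵥ y) = (x ᵥ* G⁻¹) ⬝ᵥ y := dotProduct_mulVec x G⁻¹ y
      _ = ((G⁻¹)ᵀ *ᵥ x) ⬝ᵥ y := by rw [Matrix.mulVec_transpose]
      _ = (G⁻¹ *ᵥ x) ⬝ᵥ y := by rw [hGinvsym]
      _ = y ⬝ᵥ (G⁻¹ *ᵥ x) := dotProduct_comm _ _
  set v : Fin L₀ → Fin f → ℝ := fun j p => S p j with hv
  -- identify the coefficient vector
  have hcj : ∀ j, c j = B (v j) u := by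
    intro j
    rw [hc, ← Matrix.mulVec_mulVec]
    simp [Matrix.mulVec, dotProduct, hB, hv, Matrix.transpose_apply]
  -- sum of squares of c equals B u u
  have hsum_c : ∑ j, c j ^ 2 = B u u := by
    have h1 : ∑ j, c j ^ 2 = c ⬝ᵥ c := by
      simp [dotProduct, pow_two]
    rw [h1]
    have h2 : c ⬝ᵥ c = (c ᵥ* (Sᵀ * G⁻¹)) ⬝ᵥ u := by
      nth_rewrite 2 [hc]
      exact dotProduct_mulVec c _ u
    have h3 : c ᵥ* (Sᵀ * G⁻¹) = ((Sᵀ * G⁻¹)ᵀ *ᵥ c) := (Matrix.mulVec_transpose _ c).symm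
    have h4 : (Sᵀ * G⁻¹)ᵀ = G⁻¹ * S := by
      rw [transpose_mul, transpose_transpose, hGinvsym]
    have h5 : (G⁻¹ * S) *ᵥ c = G⁻¹ *ᵥ u := by
      rw [hc, Matrix.mulVec_mulVec, Matrix.mul_assoc, ← Matrix.mul_assoc S, ← hG, hGG,
        Matrix.mul_one]
    rw [h2, h3, h4, h5, hB]
    exact dotProduct_comm _ _
  -- sum of leverages equals f
  have hsum_b : ∑ j, B (v j) (v j) = (f : ℝ) := by
    have h1 : ∀ j, B (v j) (v j) = (Sᵀ * (G⁻¹ * S)) j j := by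
      intro j
      simp [hB, hv, Matrix.mul_apply, Matrix.mulVec, dotProduct, Finset.mul_sum]
    calc ∑ j, B (v j) (v j) = ∑ j, (Sᵀ * (G⁻¹ * S)) j j := by
          exact Finset.sum_congr rfl fun j _ => h1 j
      _ = Matrix.trace (Sᵀ * (G⁻¹ * S)) := rfl
      _ = Matrix.trace ((G⁻¹ * S) * Sᵀ) := (Matrix.trace_mul_comm _ _)
      _ = Matrix.trace (G⁻¹ * G) := by rw [Matrix.mul_assoc, ← hG]
      _ = (f : ℝ) := by rw [hGG', Matrix.trace_one]; simp
  -- positivity of det G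
  have hpsd : G.PosSemidef := by
    have := Matrix.posSemidef_self_mul_conjTranspose S
    rwa [Matrix.conjTranspose_eq_transpose_of_trivial, ← hG] at this
  have hdetpos : 0 < G.det := by
    have h0 : 0 ≤ G.det := by
      rw [hpsd.isHermitian.det_eq_prod_eigenvalues]
      exact Finset.prod_nonneg fun j _ => hpsd.eigenvalues_nonneg j
    exact lt_of_le_of_ne h0 (fun h => hdetU.ne_zero h.symm)
  -- the key determinant identity
  have hkey : ∀ j : Fin L₀, ((S.updateCol j u) * (S.updateCol j u)ᵀ).det
      = G.det * ((1 + B u u) * (1 - B (v j) (v j)) + (B (v j) u) ^ 2) := by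
    intro j
    set U : Matrix (Fin f) (Fin 2) ℝ := Matrix.of fun p t => if t = 0 then u p else S p j with hU
    set W : Matrix (Fin f) (Fin 2) ℝ := Matrix.of fun p t => if t = 0 then u p else -(S p j)
      with hW
    have h1 : (S.updateCol j u) * (S.updateCol j u)ᵀ = G + U * Wᵀ := by
      ext p q
      simp only [Matrix.mul_apply, Matrix.add_apply, Matrix.transpose_apply,
        Matrix.updateCol_apply, Matrix.of_apply, hG, hU, hW]
      rw [Fin.sum_univ_two]
      have hL : ∑ l, (if l = j then u p else S p l) * (if l = j then u q else S q l)
          = u p * u q + ∑ l ∈ Finset.univ.erase j, S p l * S q l := by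
        rw [← Finset.add_sum_erase _ _ (Finset.mem_univ j), if_pos rfl, if_pos rfl]
        congr 1
        refine Finset.sum_congr rfl fun l hl => ?_
        rw [if_neg (Finset.ne_of_mem_erase hl), if_neg (Finset.ne_of_mem_erase hl)]
      have hR : ∑ l, S p l * S q l
          = S p j * S q j + ∑ l ∈ Finset.univ.erase j, S p l * S q l :=
        (Finset.add_sum_erase _ _ (Finset.mem_univ j)).symm
      rw [hL, hR]
      norm_num
      ring
    have h2 : G + U * Wᵀ = G * (1 + G⁻¹ * (U * Wᵀ)) := by
      rw [Matrix.mul_add, Matrix.mul_one, ← Matrix.mul_assoc, hGG, Matrix.one_mul]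
    have h3 : ((S.updateCol j u) * (S.updateCol j u)ᵀ).det
        = G.det * (1 + Wᵀ * (G⁻¹ * U)).det := by
      rw [h1, h2, Matrix.det_mul]
      congr 1
      rw [show G⁻¹ * (U * Wᵀ) = (G⁻¹ * U) * Wᵀ from (Matrix.mul_assoc _ _ _).symm,
        Matrix.det_one_add_mul_comm]
    have hM : ∀ t s, (Wᵀ * (G⁻¹ * U)) t s = (fun p => W p t) ⬝ᵥ (G⁻¹ *ᵥ fun p => U p s) := by
      intro t s
      simp [Matrix.mul_apply, Matrix.mulVec, dotProduct, Finset.mul_sum]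
    have hW0 : (fun p => W p (0 : Fin 2)) = u := by
      funext p; simp [hW]
    have hW1 : (fun p => W p (1 : Fin 2)) = fun p => -(v j p) := by
      funext p; simp [hW, hv]
    have hU0 : (fun p => U p (0 : Fin 2)) = u := by
      funext p; simp [hU]
    have hU1 : (fun p => U p (1 : Fin 2)) = v j := by
      funext p; simp [hU, hv]
    have hdet2 : (1 + Wᵀ * (G⁻¹ * U)).det
        = (1 + B u u) * (1 - B (v j) (v j)) + (B (v j) u) ^ 2 := by
      rw [Matrix.det_fin_two]
      simp only [Matrix.add_apply, Matrix.one_apply_eq, Matrix.one_apply_ne (by decide : (0 : Fin 2) ≠ 1),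
        Matrix.one_apply_ne (by decide : (1 : Fin 2) ≠ 0), hM]
      rw [hW0, hW1, hU0, hU1]
      have e1 : (fun p => -(v j p)) ⬝ᵥ (G⁻¹ *ᵥ v j) = -(B (v j) (v j)) := by
        simp [hB, dotProduct, neg_mul, Finset.sum_neg_distrib]
      have e2 : (fun p => -(v j p)) ⬝ᵥ (G⁻¹ *ᵥ u) = -(B (v j) u) := by
        simp [hB, dotProduct, neg_mul, Finset.sum_neg_distrib]
      have e3 : u ⬝ᵥ (G⁻¹ *ᵥ v j) = B (v j) u := by
        rw [show u ⬝ᵥ (G⁻¹ *ᵥ v j) = B u (v j) from rfl, hBsymm]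
      rw [e1, e2, e3]
      ring
    rw [h3, hdet2]
  -- per-column inequality from dominance
  have hineq : ∀ j : Fin L₀, (1 + B u u) * (1 - B (v j) (v j)) + (B (v j) u) ^ 2 ≤ 1 := by
    intro j
    have h := hdom i j
    rw [hkey j] at h
    have : G.det * ((1 + B u u) * (1 - B (v j) (v j)) + (B (v j) u) ^ 2) ≤ G.det * 1 := by
      simpa using h
    exact le_of_mul_le_mul_left this hdetpos
  -- sum the inequalities
  have hsum : (1 + B u u) * ((L₀ : ℝ) - f) + B u u ≤ (L₀ : ℝ) := by
    have h := Finset.sum_le_sum (fun j (_ : j ∈ Finset.univ) => hineq j)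
    have hls : ∑ j : Fin L₀, ((1 + B u u) * (1 - B (v j) (v j)) + (B (v j) u) ^ 2)
        = (1 + B u u) * ((L₀ : ℝ) - f) + B u u := by
      rw [Finset.sum_add_distrib, ← Finset.mul_sum]
      have : ∑ j : Fin L₀, (B (v j) u) ^ 2 = B u u := by
        rw [← hsum_c]
        exact Finset.sum_congr rfl fun j _ => by rw [hcj j]
      rw [this]
      congr 2
      rw [Finset.sum_sub_distrib, hsum_b]
      simp
    rw [hls] at h
    simpa using h
  -- conclude
  have hd : (0 : ℝ) < (L₀ : ℝ) + 1 - f := by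
    have : (f : ℝ) ≤ (L₀ : ℝ) := Nat.cast_le.mpr hfL
    linarith
  have hfin : ∑ j, c j ^ 2 ≤ (f : ℝ) / ((L₀ : ℝ) + 1 - f) := by
    rw [hsum_c, le_div_iff₀ hd]
    have hfL' : (f : ℝ) ≤ (L₀ : ℝ) := Nat.cast_le.mpr hfL
    nlinarith [hsum]
  exact Real.sqrt_le_sqrt hfin
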